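/- For probit regression, with h(η) = y log Φ(η) + (1−y) log Φ(−η) and y ∈ {0,1}, the second derivative satisfies 0 ≤ −h''(η) ≤ 1 for all η ∈ ℝ. -/

import Mathlib

open Real MeasureTheory Set Filter

noncomputable def phi (t : ℝ) : ℝ := (Real.sqrt (2 * π))⁻¹ * Real.exp (-t ^ 2 / 2)
noncomputable def Phi (s : ℝ) : ℝ := ∫ t in Set.Iic s, phi t


lemma phi_pos (t : ℝ) : 0 < phi t := by
  unfold phi
  positivity

lemma phi_cont : Continuous phi := by
  unfold phi
  fun_prop

lemma phi_eq : phi = fun x => (Real.sqrt (2 * π))⁻¹ * Real.exp (-(1/2) * x ^ 2) := by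
  funext x; unfold phi; ring_nf

lemma integrable_phi : Integrable phi := by
  rw [phi_eq]
  exact (integrable_exp_neg_mul_sq (by norm_num : (0:ℝ) < 1/2)).const_mul _

lemma hasDerivAt_phi (t : ℝ) : HasDerivAt phi (-t * phi t) t := by
  have hu : HasDerivAt (fun t : ℝ => -t ^ 2 / 2) (-t) t := by
    have := ((hasDerivAt_pow 2 t).neg.div_const 2)
    convert this using 1
    all_goals try rfl
    simp; ring
  have := (hu.exp).const_mul (Real.sqrt (2 * π))⁻¹
  convert this using 1
  all_goals try rfl
  unfold phi; ring

lemma hasDerivAt_Phi (x : ℝ) : HasDerivAt Phi (phi x) x := by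
  have key : ∀ x : ℝ, Phi x = Phi 0 + ∫ t in (0:ℝ)..x, phi t := by
    intro x
    have := intervalIntegral.integral_Iic_sub_Iic (integrable_phi.integrableOn) (integrable_phi.integrableOn) (μ := volume) (a := (0:ℝ)) (b := x)
    unfold Phi
    linarith
  have h1 : HasDerivAt (fun u : ℝ => Phi 0 + ∫ t in (0:ℝ)..u, phi t) (phi x) x := by
    refine HasDerivAt.const_add _ ?_
    exact intervalIntegral.integral_hasDerivAt_right integrable_phi.intervalIntegrable
      (phi_cont.stronglyMeasurableAtFilter _ _) phi_cont.continuousAt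
  have : Phi = fun u : ℝ => Phi 0 + ∫ t in (0:ℝ)..u, phi t := funext fun u => key u
  rw [this]
  exact h1



lemma Phi_pos (x : ℝ) : 0 < Phi x := by
  unfold Phi
  rw [setIntegral_pos_iff_support_of_nonneg_ae
    (Filter.Eventually.of_forall fun t => (phi_pos t).le) integrable_phi.integrableOn]
  have : Function.support phi = Set.univ := by
    ext t; simp [Function.mem_support, (phi_pos t).ne']
  rw [this, Set.univ_inter, Real.volume_Iic]
  simp

lemma Phi_nonneg (x : ℝ) : 0 ≤ Phi x := (Phi_pos x).le

lemma Phi_tendsto_atBot : Tendsto Phi atBot (nhds 0) := by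
  have h1 : Tendsto (fun n : ℕ => Phi (-(n:ℝ))) atTop (nhds 0) := by
    have := tendsto_setIntegral_of_antitone (μ := volume) (f := phi)
      (s := fun n : ℕ => Set.Iic (-(n:ℝ))) (fun n => measurableSet_Iic)
      (fun m n hmn => Iic_subset_Iic.2 (by exact_mod_cast neg_le_neg (Nat.cast_le.2 hmn)))
      ⟨0, integrable_phi.integrableOn⟩
    have hempty : ⋂ n : ℕ, Set.Iic (-(n:ℝ)) = ∅ := by
      apply Set.eq_empty_of_forall_notMem
      intro x hx
      rcases exists_nat_gt (-x) with ⟨n, hn⟩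
      have := Set.mem_iInter.1 hx n
      simp only [Set.mem_Iic] at this
      linarith
    rwa [hempty, Measure.restrict_empty, integral_zero_measure] at this
  -- squeeze: Phi is monotone
  have hmono : Monotone Phi := fun a b hab =>
    setIntegral_mono_set integrable_phi.integrableOn
      (Filter.Eventually.of_forall fun t => (phi_pos t).le)
      (HasSubset.Subset.eventuallyLE (Iic_subset_Iic.2 hab))
  rw [tendsto_order]
  constructor
  · intro a ha
    exact Filter.Eventually.of_forall fun x => lt_of_lt_of_le ha (Phi_nonneg x)
  · intro a ha
    rw [tendsto_order] at h1
    rcases (h1.2 a ha).exists with ⟨n, hn⟩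
    filter_upwards [eventually_le_atBot (-(n:ℝ))] with x hx
    exact lt_of_le_of_lt (hmono hx) hn


lemma sq_tendsto : Tendsto (fun x : ℝ => x ^ 2) atBot atTop := by
  exact ((tendsto_pow_atTop (two_ne_zero)).comp (tendsto_neg_atBot_atTop (G := ℝ))).congr
    fun x => neg_sq x

lemma phi_tendsto_atBot : Tendsto phi atBot (nhds 0) := by
  have h : Tendsto (fun x : ℝ => -x ^ 2 / 2) atBot atBot := by
    have := tendsto_neg_atTop_atBot.comp (sq_tendsto.atTop_div_const (by norm_num : (0:ℝ) < 2))
    refine this.congr fun x => ?_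
    simp [Function.comp]; ring
  have := (Real.tendsto_exp_atBot.comp h).const_mul (Real.sqrt (2 * π))⁻¹
  rw [mul_zero] at this
  exact this.congr fun x => rfl

lemma sq_phi_tendsto : Tendsto (fun x : ℝ => x ^ 2 * phi x) atBot (nhds 0) := by
  have base := tendsto_pow_mul_exp_neg_atTop_nhds_zero 1
  have hu : Tendsto (fun x : ℝ => x ^ 2 / 2) atBot atTop :=
    sq_tendsto.atTop_div_const (by norm_num : (0:ℝ) < 2)
  have h2 := (base.comp hu).const_mul ((Real.sqrt (2 * π))⁻¹ * 2)
  rw [mul_zero] at h2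
  refine h2.congr fun x => ?_
  simp only [Function.comp, pow_one]
  unfold phi
  rw [show -((x:ℝ) ^ 2 / 2) = -x ^ 2 / 2 by ring]
  ring

lemma poly_phi_tendsto : Tendsto (fun x : ℝ => (1 + x ^ 2) * phi x) atBot (nhds 0) := by
  have := phi_tendsto_atBot.add sq_phi_tendsto
  rw [add_zero] at this
  refine this.congr fun x => by ring

/-- If `f' ≥ 0` on `Iic a` and `f → 0` at `-∞`, then `f ≥ 0` on `Iic a`. -/
lemma nonneg_of_deriv_nonneg_tendsto {f f' : ℝ → ℝ} {a : ℝ}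
    (hd : ∀ x ∈ Set.Iic a, HasDerivAt f (f' x) x)
    (h0 : ∀ x ∈ Set.Iic a, 0 ≤ f' x)
    (hlim : Tendsto f atBot (nhds 0)) :
    ∀ x ∈ Set.Iic a, 0 ≤ f x := by
  intro x hx
  have hmono : MonotoneOn f (Set.Iic a) := by
    apply monotoneOn_of_deriv_nonneg (convex_Iic a)
    · exact fun t ht => (hd t ht).continuousAt.continuousWithinAt
    · intro t ht
      rw [interior_Iic] at ht
      exact ((hd t (Set.mem_Iic.2 (le_of_lt ht))).differentiableAt).differentiableWithinAt
    · intro t ht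
      rw [interior_Iic] at ht
      rw [(hd t (Set.mem_Iic.2 (le_of_lt ht))).deriv]
      exact h0 t (Set.mem_Iic.2 (le_of_lt ht))
  refine le_of_tendsto hlim ?_
  filter_upwards [eventually_le_atBot x] with t ht
  exact hmono (ht.trans hx) hx ht

lemma Phi_le_phi : ∀ x ∈ Set.Iic (-1 : ℝ), Phi x ≤ phi x := by
  have h := nonneg_of_deriv_nonneg_tendsto (f := fun x => phi x - Phi x)
    (f' := fun x => -x * phi x - phi x) (a := -1)
    (fun x _ => (hasDerivAt_phi x).sub (hasDerivAt_Phi x))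
    (fun x hx => by
      have h1 : x ≤ -1 := Set.mem_Iic.1 hx
      show (0:ℝ) ≤ -x * phi x - phi x
      nlinarith [phi_pos x])
    (by simpa using phi_tendsto_atBot.sub Phi_tendsto_atBot)
  intro x hx
  have := h x hx
  linarith

lemma phi_bound_aux (x : ℝ) : -x ≤ 1 + x ^ 2 := by nlinarith [sq_nonneg (1 + x)]

lemma mul_Phi_tendsto : Tendsto (fun x : ℝ => x * Phi x) atBot (nhds 0) := by
  apply squeeze_zero_norm' _ poly_phi_tendsto
  filter_upwards [eventually_le_atBot (-1 : ℝ)] with x hx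
  have h1 : Phi x ≤ phi x := Phi_le_phi x hx
  have h2 : 0 ≤ Phi x := (Phi_pos x).le
  have h3 : 0 < phi x := phi_pos x
  rw [Real.norm_eq_abs, abs_mul, abs_of_nonpos (by linarith : x ≤ 0), abs_of_nonneg h2]
  nlinarith [phi_bound_aux x]

lemma sq_mul_Phi_tendsto : Tendsto (fun x : ℝ => x ^ 2 * Phi x) atBot (nhds 0) := by
  apply squeeze_zero_norm' _ poly_phi_tendsto
  filter_upwards [eventually_le_atBot (-1 : ℝ)] with x hx
  have h1 : Phi x ≤ phi x := Phi_le_phi x hx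
  have h2 : 0 ≤ Phi x := (Phi_pos x).le
  have h3 : 0 < phi x := phi_pos x
  rw [Real.norm_eq_abs, abs_mul, abs_of_nonneg (sq_nonneg x), abs_of_nonneg h2]
  nlinarith [sq_nonneg x]

lemma mul_phi_tendsto : Tendsto (fun x : ℝ => x * phi x) atBot (nhds 0) := by
  apply squeeze_zero_norm' _ poly_phi_tendsto
  filter_upwards [eventually_le_atBot (0 : ℝ)] with x hx
  have h3 : 0 < phi x := phi_pos x
  rw [Real.norm_eq_abs, abs_mul, abs_of_nonpos hx, abs_of_nonneg h3.le]
  nlinarith [phi_bound_aux x]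

/-- `A(x) = φ(x) + x Φ(x) ≥ 0`. -/
lemma A_nonneg (x : ℝ) : 0 ≤ phi x + x * Phi x := by
  refine nonneg_of_deriv_nonneg_tendsto (f := fun x => phi x + x * Phi x) (f' := fun x => Phi x) (a := x)
    (fun t _ => ?_) (fun t _ => (Phi_pos t).le) ?_ x (Set.mem_Iic.2 le_rfl)
  · have := (hasDerivAt_phi t).add ((hasDerivAt_id t).mul (hasDerivAt_Phi t))
    convert this using 1
    all_goals try rfl
    simp only [id_eq]
    ring
  · have := phi_tendsto_atBot.add mul_Phi_tendsto
    simpa using this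

/-- `C(x) = (1+x²) Φ(x) + x φ(x) ≥ 0`. -/
lemma C_nonneg (x : ℝ) : 0 ≤ (1 + x ^ 2) * Phi x + x * phi x := by
  refine nonneg_of_deriv_nonneg_tendsto (f := fun x => (1 + x ^ 2) * Phi x + x * phi x) (f' := fun x => 2 * (phi x + x * Phi x)) (a := x)
    (fun t _ => ?_) (fun t _ => by
      show (0:ℝ) ≤ 2 * (phi t + t * Phi t)
      linarith [A_nonneg t]) ?_ x (Set.mem_Iic.2 le_rfl)
  · have h1 : HasDerivAt (fun x : ℝ => 1 + x ^ 2) (2 * t) t := by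
      simpa using ((hasDerivAt_pow 2 t).const_add 1)
    have := (h1.mul (hasDerivAt_Phi t)).add ((hasDerivAt_id t).mul (hasDerivAt_phi t))
    convert this using 1
    all_goals try rfl
    simp only [id_eq]
    ring
  · have h1 : Tendsto (fun x : ℝ => (1 + x ^ 2) * Phi x) atBot (nhds 0) := by
      have := Phi_tendsto_atBot.add sq_mul_Phi_tendsto
      rw [add_zero] at this
      exact this.congr fun x => by ring
    have := h1.add mul_phi_tendsto
    simpa using this

/-- `G(x) = Φ² − φ² − x φ Φ ≥ 0`. -/
lemma G_nonneg (x : ℝ) : 0 ≤ Phi x ^ 2 - phi x ^ 2 - x * phi x * Phi x := by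
  refine nonneg_of_deriv_nonneg_tendsto
    (f := fun x => Phi x ^ 2 - phi x ^ 2 - x * phi x * Phi x)
    (f' := fun x => phi x * ((1 + x ^ 2) * Phi x + x * phi x)) (a := x)
    (fun t _ => ?_) (fun t _ => mul_nonneg (phi_pos t).le (C_nonneg t)) ?_ x (Set.mem_Iic.2 le_rfl)
  · have := (((hasDerivAt_Phi t).pow 2).sub ((hasDerivAt_phi t).pow 2)).sub
      (((hasDerivAt_id t).mul (hasDerivAt_phi t)).mul (hasDerivAt_Phi t))
    convert this using 1
    all_goals try rfl
    simp only [id_eq, Pi.mul_apply]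
    ring
  · have h1 : Tendsto (fun x : ℝ => Phi x ^ 2) atBot (nhds 0) := by
      have := Phi_tendsto_atBot.mul Phi_tendsto_atBot
      rw [mul_zero] at this
      exact this.congr fun x => (sq (Phi x)).symm ▸ by ring
    have h2 : Tendsto (fun x : ℝ => phi x ^ 2) atBot (nhds 0) := by
      have := phi_tendsto_atBot.mul phi_tendsto_atBot
      rw [mul_zero] at this
      exact this.congr fun x => by ring
    have h3 : Tendsto (fun x : ℝ => x * phi x * Phi x) atBot (nhds 0) := by
      have := mul_phi_tendsto.mul Phi_tendsto_atBot
      rw [mul_zero] at this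
      exact this
    have := (h1.sub h2).sub h3
    simpa using this


lemma key_bounds (x : ℝ) : 0 ≤ phi x * (phi x + x * Phi x) / Phi x ^ 2 ∧
    phi x * (phi x + x * Phi x) / Phi x ^ 2 ≤ 1 := by
  constructor
  · exact div_nonneg (mul_nonneg (phi_pos x).le (A_nonneg x)) (sq_nonneg _)
  · rw [div_le_one (pow_pos (Phi_pos x) 2)]
    nlinarith [G_nonneg x]

lemma hasDerivAt_ratio (x : ℝ) : HasDerivAt (fun s => phi s / Phi s)
    (-(phi x * (phi x + x * Phi x) / Phi x ^ 2)) x := by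
  have := (hasDerivAt_phi x).div (hasDerivAt_Phi x) (Phi_pos x).ne'
  convert this using 1
  all_goals try rfl
  field_simp
  ring

/-- Probit regression second derivative bound: with
`h(η) = y log Φ(η) + (1−y) log Φ(−η)` and `y ∈ {0,1}`,
`0 ≤ −h''(η) ≤ 1` for all `η`. -/
theorem stmt_16 (y : ℝ) (hy : y = 0 ∨ y = 1) (η : ℝ) :
    let npdf : ℝ → ℝ := fun t => (Real.sqrt (2 * π))⁻¹ * Real.exp (-t ^ 2 / 2)
    let ncdf : ℝ → ℝ := fun s => ∫ t in Set.Iic s, npdf t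
    let h : ℝ → ℝ := fun s => y * Real.log (ncdf s) + (1 - y) * Real.log (ncdf (-s))
    0 ≤ -deriv (deriv h) η ∧ -deriv (deriv h) η ≤ 1 := by
  intro npdf ncdf h
  rcases hy with hy | hy <;> subst hy
  · -- y = 0 : h s = log (Phi (-s))
    have hh : h = fun s => Real.log (Phi (-s)) := by
      funext s
      show (0:ℝ) * Real.log (ncdf s) + (1 - 0) * Real.log (ncdf (-s)) = _
      norm_num
      rfl
    rw [hh]
    have d1 : deriv (fun s : ℝ => Real.log (Phi (-s))) = fun s => -(phi (-s) / Phi (-s)) := by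
      funext x
      have h1 := ((hasDerivAt_Phi (-x)).log (Phi_pos (-x)).ne').comp x (hasDerivAt_neg x)
      have h2 : HasDerivAt (fun s : ℝ => Real.log (Phi (-s))) (-(phi (-x) / Phi (-x))) x := by
        simpa [Function.comp_def, mul_comm] using h1
      exact h2.deriv
    rw [d1]
    have h3 := ((hasDerivAt_ratio (-η)).comp η (hasDerivAt_neg η)).neg
    have h4 : HasDerivAt (fun s : ℝ => -(phi (-s) / Phi (-s)))
        (-(phi (-η) * (phi (-η) + -η * Phi (-η)) / Phi (-η) ^ 2)) η := by
      simpa [Function.comp_def, Pi.neg_def] using h3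
    rw [h4.deriv, neg_neg]
    exact key_bounds (-η)
  · -- y = 1 : h s = log (Phi s)
    have hh : h = fun s => Real.log (Phi s) := by
      funext s
      show (1:ℝ) * Real.log (ncdf s) + (1 - 1) * Real.log (ncdf (-s)) = _
      norm_num
      rfl
    rw [hh]
    have d1 : deriv (fun s : ℝ => Real.log (Phi s)) = fun s => phi s / Phi s :=
      funext fun x => ((hasDerivAt_Phi x).log (Phi_pos x).ne').deriv
    rw [d1, (hasDerivAt_ratio η).deriv, neg_neg]
    exact key_bounds η
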